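/- Let 𝔽 be a commutative family of continuous self-maps of a compact metric space X. Then the non-autonomous system (X, 𝔽) is weakly mixing if and only if for every finite collection of nonempty open sets U_1,...,U_m there exists a strictly increasing sequence (r_n) of positive integers such that the closures of ω_{r_n}(U_i) converge to X in the Hausdorff metric for every i = 1,...,m. -/

import Mathlib

open Metric Set Filter

/-- For a commutative family `𝔽`, the non-autonomous system is weakly
mixing iff for every finite collection of nonempty open sets `U_1, ..., U_m` there
is a strictly increasing sequence `(r_n)` of positive integers such that
`closure (ω_{r_n}(U_i)) → X` in the Hausdorff metric for each `i`. -/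
theorem stmt3 {X : Type*} [MetricSpace X] [CompactSpace X]
    (f : ℕ → X → X) (hfc : ∀ i, Continuous (f i))
    (hcomm : ∀ i j, f i ∘ f j = f j ∘ f i)
    (ω : ℕ → X → X) (hω0 : ω 0 = id)
    (hω : ∀ k, ω (k + 1) = f (k + 1) ∘ ω k) :
    (∀ U₁ U₂ V₁ V₂ : Set X, IsOpen U₁ → IsOpen U₂ → IsOpen V₁ → IsOpen V₂ →
      U₁.Nonempty → U₂.Nonempty → V₁.Nonempty → V₂.Nonempty →
      ∃ k : ℕ, 1 ≤ k ∧ (ω k '' U₁ ∩ V₁).Nonempty ∧ (ω k '' U₂ ∩ V₂).Nonempty) ↔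
    (∀ (m : ℕ) (U : Fin m → Set X), (∀ i, IsOpen (U i)) → (∀ i, (U i).Nonempty) →
      ∃ r : ℕ → ℕ, StrictMono r ∧ 1 ≤ r 0 ∧ ∀ i,
        Filter.Tendsto (fun j : ℕ => Metric.hausdorffDist (closure (ω (r j) '' U i)) (Set.univ : Set X))
          Filter.atTop (nhds 0)) := by
  have ωcont : ∀ n, Continuous (ω n) := by
    intro n; induction n with
    | zero => rw [hω0]; exact continuous_id
    | succ n ih => rw [hω]; exact (hfc _).comp ih
  constructor
  · intro hWM m U hUo hUne
    -- commutation lemmas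
    have fω : ∀ j n x, f j (ω n x) = ω n (f j x) := by
      intro j n; induction n with
      | zero => intro x; rw [hω0]; rfl
      | succ n ih =>
        intro x
        rw [hω]
        simp only [Function.comp_apply]
        have h1 := congrFun (hcomm j (n + 1)) (ω n x)
        simp only [Function.comp_apply] at h1
        rw [h1, ih]
    have ωcomm : ∀ n k x, ω n (ω k x) = ω k (ω n x) := by
      intro n k; induction n with
      | zero => intro x; rw [hω0]; rfl
      | succ n ih =>
        intro x
        rw [hω]
        simp only [Function.comp_apply]
        rw [ih, fω]
    -- the multi-pair weak mixing lemma, via Furstenberg's trick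
    have keyL : ∀ N : ℕ, ∀ L : List (Set X × Set X), L.length ≤ N →
        (∀ p ∈ L, IsOpen p.1 ∧ IsOpen p.2 ∧ p.1.Nonempty ∧ p.2.Nonempty) →
        ∃ n, 1 ≤ n ∧ ∀ p ∈ L, ((ω n '' p.1) ∩ p.2).Nonempty := by
      intro N
      induction N with
      | zero =>
        intro L hlen _
        have : L = [] := List.length_eq_zero_iff.mp (Nat.le_zero.mp hlen)
        subst this
        exact ⟨1, le_refl _, by simp⟩
      | succ N ihN =>
        intro L hlen hH
        match L with
        | [] => exact ⟨1, le_refl _, by simp⟩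
        | [p] =>
          obtain ⟨hpo1, hpo2, hpn1, hpn2⟩ := hH p (by simp)
          obtain ⟨k, hk1, hk2, _⟩ := hWM p.1 p.1 p.2 p.2 hpo1 hpo1 hpo2 hpo2 hpn1 hpn1 hpn2 hpn2
          refine ⟨k, hk1, ?_⟩
          intro q hq
          simp only [List.mem_singleton] at hq
          subst hq
          exact hk2
        | p :: q :: L' =>
          obtain ⟨hpo1, hpo2, hpn1, hpn2⟩ := hH p (by simp)
          obtain ⟨hqo1, hqo2, hqn1, hqn2⟩ := hH q (by simp)
          obtain ⟨k, hk1, hkU, hkV⟩ :=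
            hWM p.1 p.2 q.1 q.2 hpo1 hpo2 hqo1 hqo2 hpn1 hpn2 hqn1 hqn2
          set A : Set X := p.1 ∩ (ω k) ⁻¹' q.1 with hA
          set B : Set X := p.2 ∩ (ω k) ⁻¹' q.2 with hB
          have hAne : A.Nonempty := by
            obtain ⟨y, ⟨x, hx, rfl⟩, hy⟩ := hkU
            exact ⟨x, hx, hy⟩
          have hBne : B.Nonempty := by
            obtain ⟨y, ⟨x, hx, rfl⟩, hy⟩ := hkV
            exact ⟨x, hx, hy⟩
          have hAo : IsOpen A := hpo1.inter (hqo1.preimage (ωcont k))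
          have hBo : IsOpen B := hpo2.inter (hqo2.preimage (ωcont k))
          have hlen' : ((A, B) :: L').length ≤ N := by
            simp only [List.length_cons] at hlen ⊢
            omega
          obtain ⟨n, hn1, hn⟩ := ihN ((A, B) :: L') hlen' (by
            intro r hr
            rcases List.mem_cons.mp hr with h | h
            · subst h; exact ⟨hAo, hBo, hAne, hBne⟩
            · exact hH r (by simp [h]))
          refine ⟨n, hn1, ?_⟩
          have hAB : ((ω n '' A) ∩ B).Nonempty := hn (A, B) (by simp)
          obtain ⟨y, ⟨x, hxA, rfl⟩, hyB⟩ := hAB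
          intro r hr
          rcases List.mem_cons.mp hr with h | h
          · -- r = p
            subst h
            exact ⟨ω n x, ⟨x, hxA.1, rfl⟩, hyB.1⟩
          rcases List.mem_cons.mp h with h | h
          · -- r = q
            subst h
            refine ⟨ω n (ω k x), ⟨ω k x, hxA.2, rfl⟩, ?_⟩
            rw [ωcomm]
            exact hyB.2
          · exact hn r (by simp [h])
    rcases subsingleton_or_nontrivial X with hsub | hnt
    · -- trivial space
      refine ⟨fun j => j + 1, fun a b h => Nat.add_lt_add_right h 1, le_refl _, fun i => ?_⟩
      have hcl : ∀ j : ℕ, closure (ω (j + 1) '' U i) = univ := by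
        intro j
        obtain ⟨x, hx⟩ := hUne i
        apply Set.eq_univ_of_forall
        intro z
        rw [Subsingleton.elim z (ω (j + 1) x)]
        exact subset_closure ⟨x, hx, rfl⟩
      have : (fun j : ℕ => Metric.hausdorffDist (closure (ω (j + 1) '' U i)) (univ : Set X))
          = fun _ => 0 := by
        funext j; rw [hcl j]; exact Metric.hausdorffDist_self_zero
      rw [this]
      exact tendsto_const_nhds
    · -- nontrivial space
      obtain ⟨u, v, huv⟩ := exists_pair_ne X
      have hc : (0 : ℝ) < dist u v := dist_pos.mpr huv
      set c := dist u v with hcdef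
      -- exclusion pairs: for each j, open nonempty A, B with ω j (A) ∩ B = ∅
      have excl : ∀ j : ℕ, ∃ A B : Set X, IsOpen A ∧ IsOpen B ∧ A.Nonempty ∧ B.Nonempty ∧
          ∀ x ∈ A, ω j x ∉ B := by
        intro j
        have huc : UniformContinuous (ω j) := CompactSpace.uniformContinuous_of_continuous (ωcont j)
        obtain ⟨δ, hδ, hmod⟩ := Metric.uniformContinuous_iff.mp huc (c / 4) (by linarith)
        -- pick a base point
        have hz : Nonempty X := ⟨u⟩
        obtain ⟨z⟩ := hz
        have hfar : dist u (ω j z) ≥ c / 2 ∨ dist v (ω j z) ≥ c / 2 := by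
          by_contra h
          push_neg at h
          have := dist_triangle u (ω j z) v
          rw [dist_comm (ω j z) v] at this
          simp only [← hcdef] at this
          linarith [h.1, h.2]
        obtain ⟨q, hq⟩ : ∃ q : X, dist q (ω j z) ≥ c / 2 := by
          rcases hfar with h | h
          · exact ⟨u, h⟩
          · exact ⟨v, h⟩
        refine ⟨ball z δ, ball q (c / 4), isOpen_ball, isOpen_ball,
          ⟨z, mem_ball_self hδ⟩, ⟨q, mem_ball_self (by linarith)⟩, ?_⟩
        intro x hx hmem
        have h1 : dist (ω j x) (ω j z) < c / 4 := hmod hx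
        have h2 : dist (ω j x) q < c / 4 := mem_ball.mp hmem
        have := dist_triangle q (ω j x) (ω j z)
        rw [dist_comm q (ω j x)] at this
        linarith [hq]
      choose A B hAo hBo hAne hBne hAB using excl
      -- main claim: arbitrarily large good times
      have claimA : ∀ j M : ℕ, ∃ n : ℕ, M < n ∧ ∀ i,
          Metric.hausdorffDist (closure (ω n '' U i)) (univ : Set X) ≤ 2 * (1 / ((j : ℝ) + 1)) := by
        intro j M
        set ε : ℝ := 1 / ((j : ℝ) + 1) with hεdef
        have hε : 0 < ε := by positivity
        obtain ⟨t, -, tfin, tcov⟩ := isCompact_univ.finite_cover_balls (s := (univ : Set X)) hε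
        set tl : List X := tfin.toFinset.toList with htl
        set L : List (Set X × Set X) :=
          ((Finset.Icc 1 M).toList.map fun j' => (A j', B j')) ++
          ((List.finRange m).flatMap fun i => tl.map fun cc => (U i, ball cc ε)) with hL
        obtain ⟨n, hn1, hnL⟩ := keyL L.length L le_rfl (by
          intro p hp
          rw [hL, List.mem_append] at hp
          rcases hp with hp | hp
          · obtain ⟨j', hj', rfl⟩ := List.mem_map.mp hp
            exact ⟨hAo j', hBo j', hAne j', hBne j'⟩
          · obtain ⟨i, hi, hp⟩ := List.mem_flatMap.mp hp
            obtain ⟨cc, hcc, rfl⟩ := List.mem_map.mp hp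
            exact ⟨hUo i, isOpen_ball, hUne i, ⟨cc, mem_ball_self hε⟩⟩)
        have hMn : M < n := by
          by_contra h
          push_neg at h
          have hmem : (A n, B n) ∈ L := by
            rw [hL, List.mem_append]
            left
            exact List.mem_map.mpr ⟨n, by
              rw [Finset.mem_toList, Finset.mem_Icc]; exact ⟨hn1, h⟩, rfl⟩
          obtain ⟨y, ⟨x, hx, rfl⟩, hy⟩ := hnL _ hmem
          exact hAB n x hx hy
        refine ⟨n, hMn, fun i => ?_⟩
        apply Metric.hausdorffDist_le_of_mem_dist (by positivity)
        · intro x _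
          exact ⟨x, mem_univ x, by simp only [dist_self]; positivity⟩
        · intro x _
          have hx : x ∈ ⋃ cc ∈ t, ball cc ε := tcov (mem_univ x)
          simp only [mem_iUnion, exists_prop] at hx
          obtain ⟨cc, hcct, hxcc⟩ := hx
          have hmem : (U i, ball cc ε) ∈ L := by
            rw [hL, List.mem_append]
            right
            exact List.mem_flatMap.mpr ⟨i, List.mem_finRange i,
              List.mem_map.mpr ⟨cc, by rw [htl, Finset.mem_toList, Set.Finite.mem_toFinset]; exact hcct, rfl⟩⟩
          obtain ⟨y, hyU, hyb⟩ := hnL _ hmem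
          refine ⟨y, subset_closure hyU, ?_⟩
          have h1 : dist x cc < ε := mem_ball.mp hxcc
          have h2 : dist y cc < ε := mem_ball.mp hyb
          have := dist_triangle x cc y
          rw [dist_comm cc y] at this
          linarith
      choose F hF1 hF2 using claimA
      set r : ℕ → ℕ := fun j => Nat.rec (F 0 0) (fun j prev => F (j + 1) prev) j with hr
      have hr0 : r 0 = F 0 0 := rfl
      have hrs : ∀ j, r (j + 1) = F (j + 1) (r j) := fun j => rfl
      have hmono : StrictMono r := by
        apply strictMono_nat_of_lt_succ
        intro j
        rw [hrs]
        exact hF1 (j + 1) (r j)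
      have hbound : ∀ j i, Metric.hausdorffDist (closure (ω (r j) '' U i)) (univ : Set X)
          ≤ 2 * (1 / ((j : ℝ) + 1)) := by
        intro j i
        cases j with
        | zero => exact hF2 0 0 i
        | succ j => exact hF2 (j + 1) (r j) i
      refine ⟨r, hmono, ?_, fun i => ?_⟩
      · rw [hr0]; exact hF1 0 0
      · apply squeeze_zero (fun j => Metric.hausdorffDist_nonneg) (fun j => hbound j i)
        have := tendsto_one_div_add_atTop_nhds_zero_nat.const_mul (2 : ℝ)
        simpa using this
  · -- backward direction
    intro hdense U₁ U₂ V₁ V₂ hU₁ hU₂ hV₁ hV₂ hU₁n hU₂n hV₁n hV₂n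
    obtain ⟨r, hmono, hr0, htend⟩ := hdense 2 ![U₁, U₂]
      (by intro i; fin_cases i <;> simpa) (by intro i; fin_cases i <;> simpa)
    obtain ⟨v₁, hv₁⟩ := hV₁n
    obtain ⟨v₂, hv₂⟩ := hV₂n
    obtain ⟨ε₁, hε₁, hb₁⟩ := Metric.isOpen_iff.mp hV₁ v₁ hv₁
    obtain ⟨ε₂, hε₂, hb₂⟩ := Metric.isOpen_iff.mp hV₂ v₂ hv₂
    set ε := min ε₁ ε₂ with hε
    have hεpos : 0 < ε := lt_min hε₁ hε₂
    have h1 := (htend 0).eventually (eventually_lt_nhds hεpos)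
    have h2 := (htend 1).eventually (eventually_lt_nhds hεpos)
    obtain ⟨j, hj1, hj2⟩ := (h1.and h2).exists
    refine ⟨r j, le_trans hr0 (hmono.monotone (Nat.zero_le j)), ?_, ?_⟩
    · -- U₁, V₁
      have hS : (ω (r j) '' U₁).Nonempty := hU₁n.image _
      have hne : (closure (ω (r j) '' U₁)).Nonempty := hS.closure
      have hfin : EMetric.hausdorffEdist (univ : Set X) (closure (ω (r j) '' U₁)) ≠ ⊤ :=
        Metric.hausdorffEdist_ne_top_of_nonempty_of_bounded ⟨v₁, mem_univ v₁⟩ hne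
          isCompact_univ.isBounded (isCompact_univ.isBounded.subset (subset_univ _))
      have hle : Metric.infDist v₁ (closure (ω (r j) '' U₁)) < ε := by
        calc Metric.infDist v₁ (closure (ω (r j) '' U₁))
            ≤ Metric.hausdorffDist (univ : Set X) (closure (ω (r j) '' U₁)) :=
              Metric.infDist_le_hausdorffDist_of_mem (mem_univ v₁) hfin
          _ = Metric.hausdorffDist (closure (ω (r j) '' U₁)) (univ : Set X) :=
              Metric.hausdorffDist_comm
          _ < ε := by simpa using hj1
      obtain ⟨y, hyc, hyd⟩ := (Metric.infDist_lt_iff hne).mp hle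
      have hyV : y ∈ V₁ := hb₁ (by
        rw [mem_ball, dist_comm]
        exact lt_of_lt_of_le hyd (min_le_left _ _))
      obtain ⟨z, hz1, hz2⟩ := _root_.mem_closure_iff.mp hyc V₁ hV₁ hyV
      exact ⟨z, by simpa using hz2, hz1⟩
    · -- U₂, V₂
      have hS : (ω (r j) '' U₂).Nonempty := hU₂n.image _
      have hne : (closure (ω (r j) '' U₂)).Nonempty := hS.closure
      have hfin : EMetric.hausdorffEdist (univ : Set X) (closure (ω (r j) '' U₂)) ≠ ⊤ :=
        Metric.hausdorffEdist_ne_top_of_nonempty_of_bounded ⟨v₂, mem_univ v₂⟩ hne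
          isCompact_univ.isBounded (isCompact_univ.isBounded.subset (subset_univ _))
      have hle : Metric.infDist v₂ (closure (ω (r j) '' U₂)) < ε := by
        calc Metric.infDist v₂ (closure (ω (r j) '' U₂))
            ≤ Metric.hausdorffDist (univ : Set X) (closure (ω (r j) '' U₂)) :=
              Metric.infDist_le_hausdorffDist_of_mem (mem_univ v₂) hfin
          _ = Metric.hausdorffDist (closure (ω (r j) '' U₂)) (univ : Set X) :=
              Metric.hausdorffDist_comm
          _ < ε := by simpa using hj2
      obtain ⟨y, hyc, hyd⟩ := (Metric.infDist_lt_iff hne).mp hle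
      have hyV : y ∈ V₂ := hb₂ (by
        rw [mem_ball, dist_comm]
        exact lt_of_lt_of_le hyd (min_le_right _ _))
      obtain ⟨z, hz1, hz2⟩ := _root_.mem_closure_iff.mp hyc V₂ hV₂ hyV
      exact ⟨z, by simpa using hz2, hz1⟩
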